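/- arXiv:math/0106032 — 3 statements merged into one kernel-verified Lean document; each statement's English description precedes it below -/
import Mathlib

section
/- If Σ_{j≥1} c_j e^{2πi q_j x} is the Fourier series of an essentially bounded measurable function on 𝕋¹, where the positive integers q_j satisfy the lacunarity condition q_{j+1}/q_j ≥ λ for some λ > 1, then Σ_{j≥1} |c_j| < ∞. -/
open MeasureTheory Finset Complex

noncomputable section SidonAux

namespace SidonAux

variable {q : ℕ → ℕ}

/-- sum of smaller lacunary terms is less than half the top -/
lemma sum_lt (J : Finset ℕ)
    (h3 : ∀ j ∈ J, ∀ k ∈ J, j < k → 3 * q j ≤ q k)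
    (hq : ∀ j, 0 < q j) :
    ∀ m ∈ J, 2 * ∑ j ∈ J.filter (· < m), q j < q m := by
  intro m
  induction m using Nat.strong_induction_on with
  | _ m ih =>
    intro hm
    rcases (J.filter (· < m)).eq_empty_or_nonempty with h | h
    · rw [h]; simpa using hq m
    · set m' := (J.filter (· < m)).max' h with hm'def
      have hm'mem := (J.filter (· < m)).max'_mem h
      rw [Finset.mem_filter] at hm'mem
      have hJ' : J.filter (· < m) = insert m' (J.filter (· < m')) := by
        ext j
        simp only [Finset.mem_insert, Finset.mem_filter]
        constructor
        · intro hj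
          rcases eq_or_ne j m' with h' | h'
          · exact Or.inl h'
          · refine Or.inr ⟨hj.1, lt_of_le_of_ne ?_ h'⟩
            exact (J.filter (· < m)).le_max' j (Finset.mem_filter.2 hj)
        · rintro (rfl | hj)
          · exact hm'mem
          · exact ⟨hj.1, hj.2.trans hm'mem.2⟩
      have hnotmem : m' ∉ J.filter (· < m') := by simp
      rw [hJ', Finset.sum_insert hnotmem]
      have ihm' := ih m' hm'mem.2 hm'mem.1
      have h3' := h3 m' hm'mem.1 m hm hm'mem.2
      omega

/-- uniqueness of signed representations -/
lemma eps_inj_aux (hq : ∀ j, 0 < q j) (n : ℕ) : ∀ (J : Finset ℕ),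
    J.card = n →
    (∀ j ∈ J, ∀ k ∈ J, j < k → 3 * q j ≤ q k) →
    ∀ (ε ε' : ℕ → ℤ),
    (∀ j ∈ J, |ε j| ≤ 1) → (∀ j ∈ J, |ε' j| ≤ 1) →
    (∑ j ∈ J, ε j * q j = ∑ j ∈ J, ε' j * q j) →
    ∀ j ∈ J, ε j = ε' j := by
  induction n using Nat.strong_induction_on with
  | _ n ih =>
    intro J hn h3 ε ε' hε hε' h
    rcases J.eq_empty_or_nonempty with rfl | hne
    · simp
    · set m := J.max' hne with hmdef
      have hmmem := J.max'_mem hne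
      have herase : J.erase m = J.filter (· < m) := by
        ext j
        simp only [Finset.mem_erase, Finset.mem_filter]
        constructor
        · rintro ⟨h1, h2⟩
          exact ⟨h2, lt_of_le_of_ne (J.le_max' j h2) h1⟩
        · rintro ⟨h1, h2⟩
          exact ⟨ne_of_lt h2, h1⟩
      have hsplit : ∀ g : ℕ → ℤ, ∑ j ∈ J, g j = g m + ∑ j ∈ J.erase m, g j := by
        intro g
        rw [← Finset.add_sum_erase _ _ hmmem]
      have hkey : ε m = ε' m := by
        by_contra hne'
        have h1 : (ε m - ε' m) * q m = ∑ j ∈ J.erase m, (ε' j - ε j) * q j := by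
          rw [hsplit (fun j => ε j * (q j : ℤ)), hsplit (fun j => ε' j * (q j : ℤ))] at h
          have heq : ∑ j ∈ J.erase m, (ε' j - ε j) * (q j : ℤ)
              = ∑ j ∈ J.erase m, ε' j * q j - ∑ j ∈ J.erase m, ε j * q j := by
            rw [← Finset.sum_sub_distrib]
            exact Finset.sum_congr rfl fun j _ => by ring
          rw [heq]; linear_combination h
        have hub : |∑ j ∈ J.erase m, (ε' j - ε j) * q j| ≤
            ∑ j ∈ J.erase m, 2 * (q j : ℤ) := by
          refine (Finset.abs_sum_le_sum_abs _ _).trans (Finset.sum_le_sum ?_)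
          intro j hj
          have hjJ := Finset.mem_of_mem_erase hj
          rw [abs_mul]
          have : |ε' j - ε j| ≤ 2 := by
            have h1 := hε j hjJ; have h2 := hε' j hjJ
            have := abs_sub (ε' j) (ε j)
            linarith
          have hqj : |(q j : ℤ)| = (q j : ℤ) := abs_of_nonneg (by positivity)
          rw [hqj]
          exact mul_le_mul_of_nonneg_right this (by positivity)
        have hsum := sum_lt J h3 hq m hmmem
        have hlb : (q m : ℤ) ≤ |(ε m - ε' m) * q m| := by
          rw [abs_mul]
          have h1' : (1 : ℤ) ≤ |ε m - ε' m| :=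
            Int.one_le_abs (sub_ne_zero.2 hne')
          have hqm : |(q m : ℤ)| = (q m : ℤ) := abs_of_nonneg (by positivity)
          rw [hqm]
          nlinarith [Int.natCast_pos.mpr (hq m)]
        have hc : (∑ j ∈ J.erase m, 2 * (q j : ℤ)) < q m := by
          have : ∑ j ∈ J.erase m, 2 * (q j : ℤ) = 2 * ∑ j ∈ J.erase m, (q j : ℤ) := by
            rw [Finset.mul_sum]
          rw [this, herase]
          push_cast [← Nat.cast_sum]
          exact_mod_cast hsum
        rw [h1] at hlb
        linarith
      intro j hj
      rcases eq_or_ne j m with rfl | hjm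
      · exact hkey
      · have hJ'card : (J.erase m).card < n := by
          have hpos : 0 < J.card := Finset.card_pos.2 hne
          rw [Finset.card_erase_of_mem hmmem]; omega
        refine ih _ hJ'card (J.erase m) rfl ?_ ε ε'
          (fun j hj => hε j (Finset.mem_of_mem_erase hj))
          (fun j hj => hε' j (Finset.mem_of_mem_erase hj)) ?_ j
          (Finset.mem_erase.2 ⟨hjm, hj⟩)
        · intro a ha b hb hab
          exact h3 a (Finset.mem_of_mem_erase ha) b (Finset.mem_of_mem_erase hb) hab
        · rw [hsplit (fun j => ε j * (q j : ℤ)), hsplit (fun j => ε' j * (q j : ℤ)), hkey] at h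
          linarith

lemma eps_inj (J : Finset ℕ)
    (h3 : ∀ j ∈ J, ∀ k ∈ J, j < k → 3 * q j ≤ q k)
    (hq : ∀ j, 0 < q j) (ε ε' : ℕ → ℤ)
    (hε : ∀ j ∈ J, |ε j| ≤ 1) (hε' : ∀ j ∈ J, |ε' j| ≤ 1)
    (h : ∑ j ∈ J, ε j * q j = ∑ j ∈ J, ε' j * q j) :
    ∀ j ∈ J, ε j = ε' j :=
  eps_inj_aux hq J.card J rfl h3 ε ε' hε hε' h

open AddCircle in
lemma fourier_cm_add {T : ℝ} [Fact (0 < T)] (m n : ℤ) :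
    (fourier (m + n) : C(AddCircle T, ℂ)) = fourier m * fourier n := by
  ext x; exact fourier_add

lemma norm_fourier {T : ℝ} [Fact (0 < T)] (n : ℤ) (x : AddCircle T) :
    ‖fourier n x‖ = 1 := Circle.norm_coe _

lemma prod_smul_fourier {T : ℝ} [Fact (0 < T)] (s : Finset ℕ) (b : ℕ → ℂ) (n : ℕ → ℤ) :
    ∏ j ∈ s, (b j • (fourier (n j) : C(AddCircle T, ℂ))) =
      (∏ j ∈ s, b j) • (fourier (∑ j ∈ s, n j) : C(AddCircle T, ℂ)) := by
  induction s using Finset.cons_induction with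
  | empty =>
    simp only [Finset.prod_empty, Finset.sum_empty, one_smul]
    ext x; exact fourier_zero.symm
  | cons a s ha ih =>
    rw [Finset.prod_cons, Finset.prod_cons, Finset.sum_cons, ih, smul_mul_smul_comm,
      fourier_cm_add]

open AddCircle in
lemma integral_fourier {T : ℝ} [hT : Fact (0 < T)] (n : ℤ) :
    ∫ x : AddCircle T, fourier n x ∂haarAddCircle = if n = 0 then 1 else 0 := by
  split_ifs with h
  · subst h
    have : ∀ x : AddCircle T, fourier (0 : ℤ) x = (1 : ℂ) := fun _ => fourier_zero
    simp only [this]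
    simp
  · exact integral_eq_zero_of_add_right_eq_neg (fourier_add_half_inv_index h hT.out)



abbrev Pair := (Σ _ : Finset ℕ, Finset ℕ)

def pairs (J : Finset ℕ) : Finset Pair := J.powerset.sigma fun t => t.powerset

def expo (q : ℕ → ℕ) (p : Pair) : ℤ :=
  (∑ j ∈ p.1 \ p.2, (q j : ℤ)) - ∑ j ∈ p.2, (q j : ℤ)

def coefk (a : ℕ → ℂ) (p : Pair) : ℂ :=
  (∏ j ∈ p.2, a j) * ∏ j ∈ p.1 \ p.2, (starRingEnd ℂ) (a j)

def epsf (p : Pair) (j : ℕ) : ℤ := if j ∈ p.2 then -1 else if j ∈ p.1 then 1 else 0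

lemma mem_pairs {J : Finset ℕ} {p : Pair} : p ∈ pairs J ↔ p.1 ⊆ J ∧ p.2 ⊆ p.1 := by
  cases p
  simp [pairs, Finset.mem_sigma, Finset.mem_powerset, and_comm]

lemma epsf_abs (p : Pair) (j : ℕ) : |epsf p j| ≤ 1 := by
  unfold epsf; split_ifs <;> simp

lemma mem2_iff (p : Pair) (j : ℕ) : j ∈ p.2 ↔ epsf p j = -1 := by
  unfold epsf; split_ifs with h1 h2 <;> simp_all

lemma mem1_iff {J : Finset ℕ} {p : Pair} (hp : p ∈ pairs J) (j : ℕ) :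
    j ∈ p.1 ↔ epsf p j ≠ 0 := by
  obtain ⟨h1, h2⟩ := mem_pairs.1 hp
  unfold epsf; split_ifs with hh1 hh2 <;> simp_all
  exact h2 hh1

lemma expo_eq (q : ℕ → ℕ) {J : Finset ℕ} {p : Pair} (hp : p ∈ pairs J) :
    expo q p = ∑ j ∈ J, epsf p j * q j := by
  obtain ⟨h1, h2⟩ := mem_pairs.1 hp
  rw [← Finset.sum_subset h1 (fun j _ hj1 => by
    have : j ∉ p.2 := fun hj2 => hj1 (h2 hj2)
    unfold epsf
    rw [if_neg this, if_neg hj1, zero_mul])]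
  rw [← Finset.sum_sdiff h2]
  have e1 : ∑ j ∈ p.1 \ p.2, epsf p j * (q j : ℤ) = ∑ j ∈ p.1 \ p.2, (q j : ℤ) := by
    refine Finset.sum_congr rfl fun j hj => ?_
    rw [Finset.mem_sdiff] at hj
    unfold epsf
    rw [if_neg hj.2, if_pos hj.1, one_mul]
  have e2 : ∑ j ∈ p.2, epsf p j * (q j : ℤ) = -∑ j ∈ p.2, (q j : ℤ) := by
    rw [← Finset.sum_neg_distrib]
    refine Finset.sum_congr rfl fun j hj => ?_
    unfold epsf
    rw [if_pos hj]; ring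
  rw [e1, e2, expo, sub_eq_add_neg]

lemma expo_inj (q : ℕ → ℕ) (hq : ∀ j, 0 < q j) {J : Finset ℕ}
    (h3 : ∀ j ∈ J, ∀ k ∈ J, j < k → 3 * q j ≤ q k)
    {p p' : Pair} (hp : p ∈ pairs J) (hp' : p' ∈ pairs J)
    (h : expo q p = expo q p') : p = p' := by
  have heps : ∀ j ∈ J, epsf p j = epsf p' j := by
    refine eps_inj J h3 hq (epsf p) (epsf p') (fun j _ => epsf_abs p j)
      (fun j _ => epsf_abs p' j) ?_
    rw [← expo_eq q hp, ← expo_eq q hp', h]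
  have hepsall : ∀ j, epsf p j = epsf p' j := by
    intro j
    by_cases hj : j ∈ J
    · exact heps j hj
    · have n1 : j ∉ p.1 := fun hh => hj ((mem_pairs.1 hp).1 hh)
      have n1' : j ∉ p'.1 := fun hh => hj ((mem_pairs.1 hp').1 hh)
      have n2 : j ∉ p.2 := fun hh => n1 ((mem_pairs.1 hp).2 hh)
      have n2' : j ∉ p'.2 := fun hh => n1' ((mem_pairs.1 hp').2 hh)
      unfold epsf
      rw [if_neg n1, if_neg n2, if_neg n1', if_neg n2']
  have h1 : p.1 = p'.1 := by
    ext j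
    rw [mem1_iff hp, mem1_iff hp', hepsall j]
  have h2 : p.2 = p'.2 := by
    ext j
    rw [mem2_iff, mem2_iff, hepsall j]
  exact Sigma.ext h1 (heq_of_eq h2)


open AddCircle in
lemma key (q : ℕ → ℕ) (c : ℕ → ℂ)
    (hq : ∀ j, 0 < q j) (hqmono : StrictMono q)
    (f : AddCircle (1:ℝ) → ℂ)
    (hmeas : AEStronglyMeasurable f (haarAddCircle : Measure (AddCircle (1:ℝ))))
    (C : ℝ)
    (hbd : ∀ᵐ x ∂(haarAddCircle : Measure (AddCircle (1:ℝ))), ‖f x‖ ≤ C)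
    (hcoeff : ∀ j, fourierCoeff f ((q j : ℤ)) = c j)
    (hzero : ∀ n : ℤ, (∀ j, n ≠ (q j : ℤ)) → fourierCoeff f n = 0)
    (δ : ℝ) (hδ0 : 0 < δ) (hδ1 : δ ≤ 1)
    (J : Finset ℕ) (h3 : ∀ j ∈ J, ∀ k ∈ J, j < k → 3 * q j ≤ q k)
    (K : ℕ) (hK : ∑ j ∈ J, q j < q K) :
    δ / 2 * ∑ k ∈ J, ‖c k‖ ≤ C + (δ / 2) ^ 2 * ∑ k ∈ Finset.range K, ‖c k‖ := by
  classical
  set μ : Measure (AddCircle (1:ℝ)) := haarAddCircle with hμdef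
  -- the coefficients a k
  set a : ℕ → ℂ := fun k => ((δ/2 : ℝ) : ℂ) * (if c k = 0 then 1 else (‖c k‖ : ℂ) / c k)
    with hadef
  have hanorm : ∀ k, ‖a k‖ = δ / 2 := by
    intro k
    rw [hadef]
    simp only [norm_mul, Complex.norm_real, Real.norm_eq_abs]
    rw [_root_.abs_of_nonneg (by linarith : (0:ℝ) ≤ δ/2)]
    split_ifs with h
    · simp
    · rw [norm_div, Complex.norm_real, Real.norm_eq_abs,
        _root_.abs_of_nonneg (norm_nonneg _),
        div_self (norm_ne_zero_iff.2 h), mul_one]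
  have hac : ∀ k, a k * c k = ((δ / 2 * ‖c k‖ : ℝ) : ℂ) := by
    intro k
    rw [hadef]
    simp only
    split_ifs with h
    · simp [h]
    · push_cast
      field_simp
  -- the Riesz product and its expansion
  set z : ℕ → C(AddCircle (1:ℝ), ℂ) := fun j =>
    a j • (fourier (-(q j : ℤ))) + (starRingEnd ℂ) (a j) • fourier (q j : ℤ) with hzdef
  set P : C(AddCircle (1:ℝ), ℂ) := ∏ j ∈ J, (z j + 1) with hPdef
  have hexp : P = ∑ p ∈ pairs J, coefk a p • (fourier (expo q p) : C(AddCircle (1:ℝ), ℂ)) := by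
    rw [hPdef, Finset.prod_add]
    simp only [Finset.prod_const_one, mul_one]
    rw [pairs, Finset.sum_sigma]
    refine Finset.sum_congr rfl fun t ht => ?_
    simp only [hzdef]
    rw [Finset.prod_add]
    refine Finset.sum_congr rfl fun u hu => ?_
    rw [prod_smul_fourier, prod_smul_fourier, smul_mul_smul_comm, ← fourier_cm_add]
    congr 1
    · simp [expo, Finset.sum_neg_distrib]
      ring
  -- pointwise positivity
  have hPx : ∀ x, ∃ r : ℝ, 0 ≤ r ∧ P x = (r : ℂ) := by
    intro x
    have hPapp : P x = ∏ j ∈ J, ((z j + 1) x) := by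
      rw [hPdef, ContinuousMap.prod_apply]
    rw [hPapp]
    refine Finset.prod_induction (fun j => (z j + 1) x) (fun w : ℂ => ∃ r : ℝ, 0 ≤ r ∧ w = r)
      ?_ ?_ ?_
    · rintro w1 w2 ⟨r1, hr1, rfl⟩ ⟨r2, hr2, rfl⟩
      exact ⟨r1 * r2, mul_nonneg hr1 hr2, by push_cast; ring⟩
    · exact ⟨1, zero_le_one, by norm_num⟩
    · intro j _
      have hconj : (starRingEnd ℂ) ((starRingEnd ℂ) (a j) * fourier (q j : ℤ) x)
          = a j * (starRingEnd ℂ) (fourier (q j : ℤ) x) := by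
        rw [map_mul, Complex.conj_conj]
      have hval : (z j + 1) x = 1 + ((starRingEnd ℂ) (a j) * fourier (q j : ℤ) x
          + (starRingEnd ℂ) ((starRingEnd ℂ) (a j) * fourier (q j : ℤ) x)) := by
        simp only [hzdef, ContinuousMap.add_apply, ContinuousMap.one_apply,
          ContinuousMap.smul_apply, smul_eq_mul]
        rw [fourier_neg, hconj]
        ring
      show ∃ r : ℝ, 0 ≤ r ∧ (z j + 1) x = (r : ℂ)
      rw [hval]
      set ζ := (starRingEnd ℂ) (a j) * fourier (q j : ℤ) x with hζdef
      refine ⟨1 + 2 * ζ.re, ?_, ?_⟩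
      · have h1 : ‖ζ‖ = δ / 2 := by
          rw [hζdef, norm_mul, RCLike.norm_conj, hanorm, norm_fourier, mul_one]
        have h2 : |ζ.re| ≤ ‖ζ‖ := by
          exact Complex.abs_re_le_norm ζ
        rw [h1] at h2
        have := abs_le.1 h2
        linarith [this.1]
      · rw [Complex.add_conj]
        push_cast
        ring
  -- integrability
  have hfour_bd : ∀ n : ℤ, ∃ B, ∀ x : AddCircle (1:ℝ), ‖fourier n x‖ ≤ B :=
    fun n => ⟨1, fun x => le_of_eq (norm_fourier n x)⟩
  have hf_int : Integrable f μ := Integrable.mono' (integrable_const C) hmeas hbd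
  have hfour_int : ∀ n : ℤ, Integrable (fun x => fourier n x * f x) μ := fun n =>
    hf_int.bdd_mul (map_continuous (fourier n)).aestronglyMeasurable
      (Filter.Eventually.of_forall (hfour_bd n).choose_spec)
  have hfour_int' : ∀ n : ℤ, Integrable (fun x => (fourier n x : ℂ)) μ := fun n =>
    Integrable.mono' (integrable_const 1) (map_continuous (fourier n)).aestronglyMeasurable
      (Filter.Eventually.of_forall fun x => le_of_eq (norm_fourier n x))
  have hterm_int : ∀ p ∈ pairs J,
      Integrable (fun x => coefk a p * (fourier (expo q p) x * f x)) μ := fun p _ =>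
    (hfour_int _).const_mul _
  -- the main integral identity
  have hcoeff_eq : ∀ n : ℤ, fourierCoeff f (-n) = ∫ x, fourier n x * f x ∂μ := by
    intro n
    rw [fourierCoeff, neg_neg, hμdef]
    simp only [smul_eq_mul]
  have hT : ∫ x, P x * f x ∂μ
      = ∑ p ∈ pairs J, coefk a p * fourierCoeff f (-(expo q p)) := by
    have hpt : ∀ x, P x * f x
        = ∑ p ∈ pairs J, coefk a p * (fourier (expo q p) x * f x) := by
      intro x
      rw [hexp, ContinuousMap.sum_apply, Finset.sum_mul]
      refine Finset.sum_congr rfl fun p _ => ?_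
      simp only [ContinuousMap.smul_apply, smul_eq_mul]
      ring
    simp_rw [hpt]
    rw [integral_finset_sum _ hterm_int]
    refine Finset.sum_congr rfl fun p _ => ?_
    rw [integral_const_mul, hcoeff_eq]
  -- integral of P is 1
  have hintP : ∫ x, P x ∂μ = 1 := by
    have hpt : ∀ x : AddCircle (1:ℝ),
        P x = ∑ p ∈ pairs J, coefk a p * fourier (expo q p) x := by
      intro x
      rw [hexp, ContinuousMap.sum_apply]
      exact Finset.sum_congr rfl fun p _ => by
        simp only [ContinuousMap.smul_apply, smul_eq_mul]
    simp_rw [hpt]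
    rw [integral_finset_sum _ (fun p _ => (hfour_int' _).const_mul _)]
    have hempty : (⟨∅, ∅⟩ : Pair) ∈ pairs J :=
      mem_pairs.2 ⟨Finset.empty_subset J, Finset.Subset.refl ∅⟩
    have hstep : ∀ p ∈ pairs J, coefk a p * ∫ x, fourier (expo q p) x ∂μ
        = coefk a p * (if expo q p = 0 then 1 else 0) := by
      intro p _
      rw [hμdef, integral_fourier]
    calc ∑ p ∈ pairs J, ∫ x, coefk a p * fourier (expo q p) x ∂μ
        = ∑ p ∈ pairs J, coefk a p * (if expo q p = 0 then 1 else 0) := by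
          refine Finset.sum_congr rfl fun p hp => ?_
          rw [integral_const_mul, hstep p hp]
      _ = 1 := by
          rw [Finset.sum_eq_single (⟨∅, ∅⟩ : Pair)]
          · simp [coefk, expo]
          · intro p hp hne
            have hne0 : expo q p ≠ 0 := by
              intro h0
              apply hne
              refine expo_inj q hq h3 hp hempty ?_
              rw [h0]
              simp [expo]
            rw [if_neg hne0, mul_zero]
          · intro h
            exact absurd hempty h
  -- bound on the integral
  have hP_int : Integrable (⇑P) μ :=
    Integrable.mono' (integrable_const ‖P‖) P.continuous.aestronglyMeasurable
      (Filter.Eventually.of_forall fun x => P.norm_coe_le_norm x)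
  have hPf_int : Integrable (fun x => P x * f x) μ :=
    hf_int.bdd_mul P.continuous.aestronglyMeasurable (Filter.Eventually.of_forall fun x => P.norm_coe_le_norm x)
  have hPre_int : Integrable (fun x => (P x).re) μ := by
    have := hP_int.re
    simpa using this
  have hTbound : ‖∫ x, P x * f x ∂μ‖ ≤ C := by
    refine (norm_integral_le_integral_norm _).trans ?_
    have hmono : ∫ x, ‖P x * f x‖ ∂μ ≤ ∫ x, C * (P x).re ∂μ := by
      refine integral_mono_ae hPf_int.norm (hPre_int.const_mul C) ?_
      filter_upwards [hbd] with x hx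
      obtain ⟨r, hr0, hr⟩ := hPx x
      have h1 : ‖P x‖ = r := by
        rw [hr, Complex.norm_real, Real.norm_eq_abs, _root_.abs_of_nonneg hr0]
      have h2 : (P x).re = r := by rw [hr, Complex.ofReal_re]
      rw [norm_mul, h1, h2]
      calc r * ‖f x‖ ≤ r * C := mul_le_mul_of_nonneg_left hx hr0
        _ = C * r := mul_comm _ _
    refine hmono.trans ?_
    rw [integral_const_mul]
    have hre1 : ∫ x, (P x).re ∂μ = 1 := by
      have h := integral_re hP_int
      simp only [RCLike.re_to_complex] at h
      rw [h, hintP]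
      simp
    rw [hre1, mul_one]
  -- main terms
  set Main : Finset Pair := J.image (fun k => (⟨{k}, {k}⟩ : Pair)) with hMaindef
  have hMain_sub : Main ⊆ pairs J := by
    intro p hp
    rw [hMaindef, Finset.mem_image] at hp
    obtain ⟨k, hk, rfl⟩ := hp
    exact mem_pairs.2 ⟨Finset.singleton_subset_iff.2 hk, Finset.Subset.refl _⟩
  have hMain_inj : ∀ x ∈ J, ∀ y ∈ J, (⟨{x}, {x}⟩ : Pair) = ⟨{y}, {y}⟩ → x = y := by
    intro x _ y _ h
    have h1 : ({x} : Finset ℕ) = {y} := congrArg (fun p : Pair => p.1) h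
    exact Finset.singleton_injective h1
  set term : Pair → ℂ := fun p => coefk a p * fourierCoeff f (-(expo q p)) with htermdef
  have hMainval : ∑ p ∈ Main, term p = ((δ / 2 * ∑ k ∈ J, ‖c k‖ : ℝ) : ℂ) := by
    rw [hMaindef, Finset.sum_image hMain_inj]
    have hstep : ∀ k ∈ J, term ⟨{k}, {k}⟩ = ((δ / 2 * ‖c k‖ : ℝ) : ℂ) := by
      intro k hk
      have h1 : expo q (⟨{k}, {k}⟩ : Pair) = -(q k : ℤ) := by simp [expo]
      have h2 : coefk a (⟨{k}, {k}⟩ : Pair) = a k := by simp [coefk]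
      rw [htermdef]
      simp only
      rw [h1, h2, neg_neg, hcoeff k, hac k]
    rw [Finset.sum_congr rfl hstep, ← Complex.ofReal_sum, Finset.mul_sum]
  -- the collision index function
  set g : Pair → ℕ := fun p => if h : ∃ k, ((q k : ℤ) = -(expo q p)) then h.choose else 0
    with hgdef
  have hgspec : ∀ p : Pair, (∃ k, (q k : ℤ) = -(expo q p)) → (q (g p) : ℤ) = -(expo q p) := by
    intro p hex
    rw [hgdef]
    simp only
    rw [dif_pos hex]
    exact hex.choose_spec
  set Rest : Finset Pair := pairs J \ Main with hRestdef
  have hrest_bound : ∀ p ∈ Rest, term p ≠ 0 →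
      (q (g p) : ℤ) = -(expo q p) ∧ g p < K ∧ ‖term p‖ ≤ (δ / 2) ^ 2 * ‖c (g p)‖ := by
    intro p hpR hpne
    have hpPS : p ∈ pairs J := (Finset.mem_sdiff.1 hpR).1
    have hpM : p ∉ Main := (Finset.mem_sdiff.1 hpR).2
    obtain ⟨h1J, h21⟩ := mem_pairs.1 hpPS
    have hfne : fourierCoeff f (-(expo q p)) ≠ 0 := by
      intro h
      apply hpne
      rw [htermdef]
      simp [h]
    have hex : ∃ k, (q k : ℤ) = -(expo q p) := by
      by_contra hne
      push_neg at hne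
      exact hfne (hzero _ (fun j => fun hh => hne j hh.symm))
    have hgp : (q (g p) : ℤ) = -(expo q p) := hgspec p hex
    have hgpK : g p < K := by
      have h1 : (q (g p) : ℤ) ≤ ∑ j ∈ p.2, (q j : ℤ) := by
        rw [hgp, expo]
        have h0 : (0:ℤ) ≤ ∑ j ∈ p.1 \ p.2, (q j : ℤ) :=
          Finset.sum_nonneg fun j _ => by positivity
        linarith
      have h2 : ∑ j ∈ p.2, (q j : ℤ) ≤ ∑ j ∈ J, (q j : ℤ) :=
        Finset.sum_le_sum_of_subset_of_nonneg (h21.trans h1J)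
          (fun j _ _ => by positivity)
      have h3' : (∑ j ∈ J, (q j : ℤ)) < (q K : ℤ) := by
        have := hK
        push_cast
        exact_mod_cast hK
      have h4 : q (g p) < q K := by exact_mod_cast lt_of_le_of_lt (h1.trans h2) h3'
      exact hqmono.lt_iff_lt.1 h4
    have hcard : 2 ≤ p.1.card := by
      by_contra hlt
      push_neg at hlt
      have hlt' : p.1.card = 0 ∨ p.1.card = 1 := by omega
      rcases hlt' with h0 | h1
      · rw [Finset.card_eq_zero] at h0
        have h20 : p.2 = ∅ := Finset.subset_empty.1 (h0 ▸ h21)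
        have hE : expo q p = 0 := by rw [expo, h0, h20]; simp
        rw [hE] at hgp
        have := hq (g p)
        omega
      · obtain ⟨j, hj⟩ := Finset.card_eq_one.1 h1
        rcases Finset.subset_singleton_iff.1 (hj ▸ h21) with h2 | h2
        · have hE : expo q p = (q j : ℤ) := by rw [expo, hj, h2]; simp
          rw [hE] at hgp
          have := hq (g p)
          have := hq j
          omega
        · apply hpM
          rw [hMaindef, Finset.mem_image]
          refine ⟨j, h1J (hj ▸ Finset.mem_singleton_self j), ?_⟩
          exact (Sigma.ext (x := p) (y := ⟨{j}, {j}⟩) hj (heq_of_eq h2)).symm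
    have hκ : ‖coefk a p‖ = (δ / 2) ^ p.1.card := by
      have e1 : ∏ j ∈ p.2, ‖a j‖ = (δ / 2) ^ p.2.card :=
        (Finset.prod_congr rfl (fun j _ => hanorm j)).trans (Finset.prod_const _)
      have e2 : ∏ j ∈ p.1 \ p.2, ‖(starRingEnd ℂ) (a j)‖ = (δ / 2) ^ (p.1 \ p.2).card :=
        (Finset.prod_congr rfl (fun j _ => by rw [RCLike.norm_conj]; exact hanorm j)).trans
          (Finset.prod_const _)
      rw [coefk, norm_mul, norm_prod, norm_prod, e1, e2, ← pow_add]
      congr 1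
      rw [add_comm]
      exact Finset.card_sdiff_add_card_eq_card h21
    have hκ2 : ‖coefk a p‖ ≤ (δ / 2) ^ 2 := by
      rw [hκ]
      refine pow_le_pow_of_le_one (by positivity) (by linarith) hcard
    refine ⟨hgp, hgpK, ?_⟩
    rw [htermdef]
    simp only
    rw [norm_mul]
    have hcc : fourierCoeff f (-(expo q p)) = c (g p) := by
      rw [← hgp, hcoeff]
    rw [hcc]
    exact mul_le_mul_of_nonneg_right hκ2 (norm_nonneg _)
  have hRestsum : ‖∑ p ∈ Rest, term p‖ ≤ (δ / 2) ^ 2 * ∑ k ∈ Finset.range K, ‖c k‖ := by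
    refine (norm_sum_le _ _).trans ?_
    set R : Finset Pair := Rest.filter (fun p => term p ≠ 0) with hRdef
    have hsplit : ∑ p ∈ Rest, ‖term p‖ = ∑ p ∈ R, ‖term p‖ := by
      rw [hRdef]
      exact (Finset.sum_filter_of_ne (fun p _ hp => by
        intro h0
        exact hp (by rw [h0, norm_zero]))).symm
    rw [hsplit]
    have hle : ∑ p ∈ R, ‖term p‖ ≤ ∑ p ∈ R, (δ / 2) ^ 2 * ‖c (g p)‖ := by
      refine Finset.sum_le_sum fun p hp => ?_
      rw [hRdef, Finset.mem_filter] at hp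
      exact (hrest_bound p hp.1 hp.2).2.2
    refine hle.trans ?_
    have hginj : ∀ x ∈ R, ∀ y ∈ R, g x = g y → x = y := by
      intro x hx y hy hxy
      rw [hRdef, Finset.mem_filter] at hx hy
      have h1 := (hrest_bound x hx.1 hx.2).1
      have h2 := (hrest_bound y hy.1 hy.2).1
      refine expo_inj q hq h3 (Finset.mem_sdiff.1 hx.1).1 (Finset.mem_sdiff.1 hy.1).1 ?_
      have : -(expo q x) = -(expo q y) := by rw [← h1, ← h2, hxy]
      omega
    calc ∑ p ∈ R, (δ / 2) ^ 2 * ‖c (g p)‖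
        = ∑ k ∈ R.image g, (δ / 2) ^ 2 * ‖c k‖ :=
          (Finset.sum_image (f := fun k => (δ / 2) ^ 2 * ‖c k‖) hginj).symm
      _ ≤ ∑ k ∈ Finset.range K, (δ / 2) ^ 2 * ‖c k‖ := by
          refine Finset.sum_le_sum_of_subset_of_nonneg ?_ (fun k _ _ => by positivity)
          intro k hk
          rw [Finset.mem_image] at hk
          obtain ⟨p, hp, rfl⟩ := hk
          rw [hRdef, Finset.mem_filter] at hp
          exact Finset.mem_range.2 (hrest_bound p hp.1 hp.2).2.1
      _ = (δ / 2) ^ 2 * ∑ k ∈ Finset.range K, ‖c k‖ := (Finset.mul_sum _ _ _).symm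
  -- combine
  have hsum_split : ∑ p ∈ Rest, term p + ∑ p ∈ Main, term p = ∑ p ∈ pairs J, term p :=
    Finset.sum_sdiff hMain_sub
  have hMainnorm : ‖∑ p ∈ Main, term p‖ = δ / 2 * ∑ k ∈ J, ‖c k‖ := by
    rw [hMainval, Complex.norm_real, Real.norm_eq_abs, _root_.abs_of_nonneg]
    positivity
  have hMaineq : ∑ p ∈ Main, term p
      = ∑ p ∈ pairs J, term p - ∑ p ∈ Rest, term p := by
    rw [← hsum_split]; ring
  calc δ / 2 * ∑ k ∈ J, ‖c k‖ = ‖∑ p ∈ Main, term p‖ := hMainnorm.symm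
    _ = ‖∑ p ∈ pairs J, term p - ∑ p ∈ Rest, term p‖ := by rw [hMaineq]
    _ ≤ ‖∑ p ∈ pairs J, term p‖ + ‖∑ p ∈ Rest, term p‖ := norm_sub_le _ _
    _ ≤ C + (δ / 2) ^ 2 * ∑ k ∈ Finset.range K, ‖c k‖ := by
        refine add_le_add ?_ hRestsum
        rw [htermdef, ← hT]
        exact hTbound


end SidonAux

open SidonAux AddCircle Finset

/-- Sidon's theorem on lacunary Fourier series: if `Σ c_j e^{2πi q_j x}` is the
Fourier series of an essentially bounded measurable function on `𝕋¹`, where the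
positive integers `q_j` satisfy `q_{j+1}/q_j ≥ λ` for some `λ > 1`, then
`Σ |c_j| < ∞`. -/
theorem stmt7 (q : ℕ → ℕ) (c : ℕ → ℂ) (lam : ℝ) (hlam : 1 < lam)
    (hq : ∀ j, 0 < q j) (hlac : ∀ j, lam * q j ≤ q (j + 1))
    (f : AddCircle (1:ℝ) → ℂ)
    (hmeas : AEStronglyMeasurable f volume)
    (hbd : ∃ C : ℝ, ∀ᵐ x ∂(volume : Measure (AddCircle (1:ℝ))), ‖f x‖ ≤ C)
    (hcoeff : ∀ j, fourierCoeff f ((q j : ℤ)) = c j)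
    (hzero : ∀ n : ℤ, (∀ j, n ≠ (q j : ℤ)) → fourierCoeff f n = 0) :
    Summable fun j => ‖c j‖ := by
  classical
  obtain ⟨C0, hbd0⟩ := hbd
  set C := |C0| with hCdef
  have hC0 : 0 ≤ C := abs_nonneg _
  have hμ : (volume : Measure (AddCircle (1:ℝ))) = haarAddCircle := by
    rw [AddCircle.volume_eq_smul_haarAddCircle]
    simp
  have hbd' : ∀ᵐ x ∂(haarAddCircle : Measure (AddCircle (1:ℝ))), ‖f x‖ ≤ C := by
    rw [← hμ]
    filter_upwards [hbd0] with x hx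
    exact hx.trans (le_abs_self C0)
  have hmeas' : AEStronglyMeasurable f (haarAddCircle : Measure (AddCircle (1:ℝ))) :=
    hμ ▸ hmeas
  have hf_int : Integrable f (haarAddCircle : Measure (AddCircle (1:ℝ))) :=
    Integrable.mono' (integrable_const C) hmeas' hbd'
  have hlam0 : (0:ℝ) < lam := lt_trans zero_lt_one hlam
  have hlam1 : (1:ℝ) ≤ lam := hlam.le
  have hmono : StrictMono q := by
    refine strictMono_nat_of_lt_succ fun n => ?_
    have h1 : (q n : ℝ) < lam * q n := by
      have : (0:ℝ) < (q n : ℝ) := by exact_mod_cast hq n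
      nlinarith
    exact_mod_cast h1.trans_le (hlac n)
  have hpow : ∀ j n : ℕ, lam ^ n * q j ≤ q (j + n) := by
    intro j n
    induction n with
    | zero => simp
    | succ n ih =>
      have h2 : lam * (lam ^ n * (q j : ℝ)) ≤ lam * q (j + n) :=
        mul_le_mul_of_nonneg_left ih hlam0.le
      have h3 : lam * (q (j + n) : ℝ) ≤ q (j + n + 1) := hlac (j + n)
      calc lam ^ (n + 1) * (q j : ℝ) = lam * (lam ^ n * q j) := by ring
        _ ≤ lam * q (j + n) := h2
        _ ≤ q (j + n + 1) := h3
  obtain ⟨s, hs3⟩ := pow_unbounded_of_one_lt (3:ℝ) hlam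
  have hs0 : 0 < s := by
    rcases Nat.eq_zero_or_pos s with rfl | h
    · exfalso; rw [pow_zero] at hs3; linarith
    · exact h
  have hσ1 : (1:ℝ) ≤ (s:ℝ) := by exact_mod_cast hs0
  have hσ0 : (0:ℝ) < (s:ℝ) := by positivity
  have hcb : ∀ k, ‖c k‖ ≤ C := by
    intro k
    rw [← hcoeff k, fourierCoeff]
    refine (norm_integral_le_integral_norm _).trans ?_
    have hpt : ∀ x : AddCircle (1:ℝ), ‖fourier (-(q k : ℤ)) x • f x‖ = ‖f x‖ := by
      intro x
      rw [norm_smul, norm_fourier, one_mul]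
    rw [integral_congr_ae (Filter.Eventually.of_forall hpt)]
    have := integral_mono_ae hf_int.norm (integrable_const C)
      (by filter_upwards [hbd'] with x hx using hx)
    simpa using this
  have hbound : ∀ M, ∑ k ∈ Finset.range M, ‖c k‖ ≤ 4 * (s:ℝ)^2 * C + (s:ℝ) * C := by
    intro M
    set T : ℕ → ℝ := fun N => ∑ k ∈ Finset.range N, ‖c k‖ with hTdef
    have hT0 : ∀ N, 0 ≤ T N := fun N => Finset.sum_nonneg fun k _ => norm_nonneg _
    set J : ℕ → Finset ℕ := fun r => (Finset.range M).filter (fun j => j % s = r) with hJdef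
    have h3r : ∀ r, ∀ j ∈ J r, ∀ k ∈ J r, j < k → 3 * q j ≤ q k := by
      intro r j hj k hk hjk
      simp only [hJdef, Finset.mem_filter, Finset.mem_range] at hj hk
      have hmod : j % s = k % s := by rw [hj.2, hk.2]
      have hdvd : s ∣ (k - j) := (Nat.modEq_iff_dvd' hjk.le).1 hmod
      have hks : j + s ≤ k := by
        have hpos : 0 < k - j := by omega
        have := Nat.le_of_dvd hpos hdvd
        omega
      have hq0 : (0:ℝ) ≤ (q j : ℝ) := by positivity
      have h1 : (3:ℝ) * q j ≤ lam ^ s * q j := by nlinarith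
      have h2 : lam ^ s * (q j:ℝ) ≤ lam ^ (k - j) * q j := by
        refine mul_le_mul_of_nonneg_right ?_ hq0
        exact pow_le_pow_right₀ hlam1 (by omega)
      have h3' : lam ^ (k - j) * (q j:ℝ) ≤ q (j + (k - j)) := hpow j (k - j)
      have hfin : (3:ℝ) * q j ≤ q k := by
        have hjk' : j + (k - j) = k := by omega
        rw [hjk'] at h3'
        linarith
      exact_mod_cast hfin
    have hK : ∀ r, ∑ j ∈ J r, q j < q (M + s) := by
      intro r
      rcases (J r).eq_empty_or_nonempty with he | hne
      · rw [he]; simpa using hq (M + s)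
      · set m := (J r).max' hne with hmdef
        have hmmem := (J r).max'_mem hne
        have hmM : m < M := by
          have := hmmem
          simp only [hJdef, Finset.mem_filter, Finset.mem_range] at this
          exact this.1
        have herase : (J r).erase m = (J r).filter (· < m) := by
          ext j
          simp only [Finset.mem_erase, Finset.mem_filter]
          constructor
          · rintro ⟨h1, h2⟩; exact ⟨h2, lt_of_le_of_ne ((J r).le_max' j h2) h1⟩
          · rintro ⟨h1, h2⟩; exact ⟨ne_of_lt h2, h1⟩
        have h2' := sum_lt (J r) (h3r r) hq m hmmem
        have hs' : ∑ j ∈ J r, q j = q m + ∑ j ∈ (J r).erase m, q j :=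
          (Finset.add_sum_erase _ _ hmmem).symm
        rw [herase] at hs'
        have h3m : 3 * (q m : ℝ) ≤ q (M + s) := by
          have h1 : lam ^ (M + s - m) * q m ≤ q (m + (M + s - m)) := hpow m (M + s - m)
          have heq : m + (M + s - m) = M + s := by omega
          rw [heq] at h1
          have h2 : lam ^ (s+1) ≤ lam ^ (M + s - m) := pow_le_pow_right₀ hlam1 (by omega)
          have h33 : (3:ℝ) ≤ lam ^ (s+1) := by
            have he' : lam ^ (s+1) = lam ^ s * lam := by ring
            nlinarith
          have hq0 : (0:ℝ) ≤ (q m : ℝ) := by positivity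
          nlinarith
        have h3m' : 3 * q m ≤ q (M + s) := by exact_mod_cast h3m
        omega
    have hkey : ∀ r, (1/(s:ℝ))/2 * ∑ k ∈ J r, ‖c k‖
        ≤ C + ((1/(s:ℝ))/2)^2 * ∑ k ∈ Finset.range (M + s), ‖c k‖ := by
      intro r
      exact key q c hq hmono f hmeas' C hbd' hcoeff hzero (1/(s:ℝ))
        (by positivity) ((div_le_one hσ0).2 hσ1) (J r) (h3r r) (M + s) (hK r)
    have hfiber : ∑ r ∈ Finset.range s, ∑ k ∈ J r, ‖c k‖ = T M := by
      rw [hTdef]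
      exact Finset.sum_fiberwise_of_maps_to (fun j _ => Finset.mem_range.2 (Nat.mod_lt j hs0)) _
    have hsumkey : (1/(s:ℝ))/2 * T M
        ≤ (s:ℝ) * (C + ((1/(s:ℝ))/2)^2 * T (M + s)) := by
      have hsum := Finset.sum_le_sum (fun r (_ : r ∈ Finset.range s) => hkey r)
      rw [← Finset.mul_sum, hfiber, Finset.sum_const, Finset.card_range,
        nsmul_eq_mul] at hsum
      exact hsum
    have hTs : T (M + s) ≤ T M + (s:ℝ) * C := by
      have hsplit := Finset.sum_range_add_sum_Ico (fun k => ‖c k‖) (Nat.le_add_right M s)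
      have hico : ∑ k ∈ Finset.Ico M (M + s), ‖c k‖ ≤ (s:ℝ) * C := by
        have hcard : (Finset.Ico M (M+s)).card = s := by rw [Nat.card_Ico]; omega
        calc ∑ k ∈ Finset.Ico M (M + s), ‖c k‖ ≤ ∑ _k ∈ Finset.Ico M (M+s), C :=
              Finset.sum_le_sum fun k _ => hcb k
          _ = (s:ℝ) * C := by rw [Finset.sum_const, hcard, nsmul_eq_mul]
      rw [hTdef]
      simp only
      linarith [hsplit]
    have hσne : (s:ℝ) ≠ 0 := ne_of_gt hσ0
    have hclean : 2 * T M ≤ 4 * (s:ℝ)^2 * C + T (M + s) := by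
      have hmul := mul_le_mul_of_nonneg_left hsumkey
        (by positivity : (0:ℝ) ≤ 4 * (s:ℝ))
      have e1 : 4 * (s:ℝ) * ((1/(s:ℝ))/2 * T M) = 2 * T M := by
        field_simp
        ring
      have e2 : 4 * (s:ℝ) * ((s:ℝ) * (C + ((1/(s:ℝ))/2)^2 * T (M + s)))
          = 4 * (s:ℝ)^2 * C + T (M + s) := by
        field_simp
        ring
      rw [e1, e2] at hmul
      exact hmul
    have := hT0 M
    have := hT0 (M + s)
    have hgoal : T M ≤ 4 * (s:ℝ)^2 * C + (s:ℝ) * C := by linarith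
    exact hgoal
  exact summable_of_sum_range_le (fun n => norm_nonneg _) hbound
end SidonAux
end

section
/- Let f : 𝕋¹ × X → 𝕋¹ × X (X a compact metric space) be a homeomorphism; more specifically let f(x,y) = (x + α, y + φ(x)) on 𝕋² with α irrational and φ : 𝕋¹ → ℝ continuous. If f is not minimal, then there exist a continuous function g : 𝕋¹ → ℝ and r ∈ ℝ such that φ(x) = g(x) - g(x + α) + r for all x. -/
open Set Function
local notation "𝕋" => AddCircle (1:ℝ)


/-- Closed graph + compact codomain implies continuous. -/
lemma fd_closed_graph {X Y : Type*} [TopologicalSpace X] [TopologicalSpace Y] [CompactSpace Y]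
    (f : X → Y) (h : IsClosed {p : X × Y | p.2 = f p.1}) : Continuous f := by
  rw [continuous_iff_isClosed]
  intro C hC
  have key : f ⁻¹' C = Prod.fst '' ({p : X × Y | p.2 = f p.1} ∩ univ ×ˢ C) := by
    ext x
    constructor
    · intro hx; exact ⟨(x, f x), ⟨rfl, ⟨trivial, hx⟩⟩, rfl⟩
    · rintro ⟨⟨x', y⟩, ⟨hy, -, hyC⟩, rfl⟩
      simp only [mem_setOf_eq] at hy
      simpa [← hy] using hyC
  rw [key]
  exact isClosedMap_fst_of_compactSpace _ (h.inter (isClosed_univ.prod hC))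

/-- A continuous integer-valued function on a connected space is constant. -/
lemma fd_int_const {X : Type*} [TopologicalSpace X] [ConnectedSpace X]
    {E : X → ℝ} (hE : Continuous E) (h : ∀ x, ∃ n : ℤ, E x = n) (x y : X) : E x = E y := by
  by_contra hne
  wlog hlt : E x < E y generalizing x y
  · exact this y x (Ne.symm hne) (lt_of_le_of_ne (not_lt.mp hlt) (Ne.symm hne))
  obtain ⟨nx, hnx⟩ := h x
  obtain ⟨ny, hny⟩ := h y
  have hmem : (nx : ℝ) + 1/2 ∈ Icc (E x) (E y) := by
    constructor
    · rw [hnx]; linarith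
    · have : nx < ny := by exact_mod_cast hnx ▸ hny ▸ hlt
      have : (nx : ℝ) + 1 ≤ ny := by exact_mod_cast this
      rw [hny]; linarith
  obtain ⟨z, hz⟩ := intermediate_value_univ x y hE hmem
  obtain ⟨nz, hnz⟩ := h z
  rw [hnz] at hz
  have h1' : nx < nz := by exact_mod_cast show (nx:ℝ) < nz by linarith
  have h2'' : nz < nx + 1 := by exact_mod_cast show (nz:ℝ) < ((nx + 1 : ℤ) : ℝ) by push_cast; linarith
  omega

/-- Density of the forward orbit of an irrational rotation. -/
lemma fd_dense_orbit (α : ℝ) (hα : Irrational α) (x₀ : 𝕋) :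
    Dense (range fun n : ℕ => x₀ + n • ((α : 𝕋))) := by
  have hz : DenseRange (fun k : ℤ => k • ((α : 𝕋))) := by
    set G : AddSubgroup ℝ := AddSubgroup.zmultiples α ⊔ AddSubgroup.zmultiples (1:ℝ) with hG
    rcases G.dense_or_cyclic with hd | ⟨g, hg⟩
    · have hsub : ((↑) : ℝ → 𝕋) '' (G : Set ℝ) ⊆ range (fun k : ℤ => k • ((α : 𝕋))) := by
        rintro - ⟨x, hx, rfl⟩
        rw [SetLike.mem_coe, AddSubgroup.mem_sup] at hx
        obtain ⟨y, hy, z, hz, rfl⟩ := hx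
        obtain ⟨m, rfl⟩ := AddSubgroup.mem_zmultiples_iff.mp hy
        obtain ⟨n, rfl⟩ := AddSubgroup.mem_zmultiples_iff.mp hz
        refine ⟨m, ?_⟩
        push_cast [AddCircle.coe_add]
        have h1 : ((n • (1:ℝ) : ℝ) : 𝕋) = 0 := by
          rw [AddCircle.coe_zsmul]
          simp [AddCircle.coe_period]
        rw [AddCircle.coe_zsmul, h1, add_zero]
      have hdim : Dense (((↑) : ℝ → 𝕋) '' (G : Set ℝ)) := by
        rw [dense_iff_closure_eq]
        apply eq_univ_of_univ_subset
        have : (univ : Set 𝕋) = ((↑) : ℝ → 𝕋) '' closure (G : Set ℝ) := by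
          rw [hd.closure_eq, image_univ, Set.range_eq_univ.mpr QuotientAddGroup.mk_surjective]
        rw [this]
        exact image_closure_subset_closure_image (AddCircle.continuous_mk' 1)
      exact (hdim.mono hsub)
    · exfalso
      rw [← AddSubgroup.zmultiples_eq_closure] at hg
      have hαG : α ∈ G := AddSubgroup.mem_sup_left (AddSubgroup.mem_zmultiples α)
      have h1G : (1:ℝ) ∈ G := AddSubgroup.mem_sup_right (AddSubgroup.mem_zmultiples 1)
      rw [hg] at hαG h1G
      obtain ⟨m, hm⟩ := AddSubgroup.mem_zmultiples_iff.mp hαG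
      obtain ⟨n, hn⟩ := AddSubgroup.mem_zmultiples_iff.mp h1G
      rw [zsmul_eq_mul] at hm hn
      have hn0 : (n : ℝ) ≠ 0 := by
        intro h0
        rw [h0, zero_mul] at hn
        exact one_ne_zero hn.symm
      have : α = (m : ℝ) / (n : ℝ) := by
        field_simp
        calc α * n = m * g * n := by rw [hm]
        _ = (m:ℝ) * (n * g) := by ring
        _ = m := by rw [hn, mul_one]
      rw [this] at hα
      have : ((m / n : ℚ) : ℝ) = (m:ℝ) / (n:ℝ) := by push_cast; ring
      exact (Rat.not_irrational (m / n)) (by rwa [this])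
  have hn : DenseRange (fun n : ℕ => n • ((α : 𝕋))) := denseRange_zsmul_iff_nsmul.mp hz
  have : DenseRange ((fun y : 𝕋 => x₀ + y) ∘ fun n : ℕ => n • ((α : 𝕋))) := by
    apply DenseRange.comp _ hn (continuous_add_left x₀)
    exact (Homeomorph.addLeft x₀).surjective.denseRange
  exact this


lemma fd_coe_sum (s : Finset ℕ) (f : ℕ → ℝ) :
    ((∑ j ∈ s, f j : ℝ) : 𝕋) = ∑ j ∈ s, ((f j : ℝ) : 𝕋) := by
  induction s using Finset.cons_induction with
  | empty => simp
  | cons j s hj ih => rw [Finset.sum_cons, Finset.sum_cons, AddCircle.coe_add, ih]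

lemma fd_coe_int_eq_zero (n : ℤ) : (((n : ℝ)) : 𝕋) = 0 := by
  rw [AddCircle.coe_eq_zero_iff]
  exact ⟨n, by simp [zsmul_eq_mul]⟩

lemma fd_decomp (χ : 𝕋 → 𝕋) (hχ : Continuous χ) :
    ∃ (u : 𝕋 → ℝ) (d : ℤ), Continuous u ∧ ∀ t : ℝ, χ t = ((u t + d * t : ℝ) : 𝕋) := by
  classical
  set A : ℝ := -(2⁻¹) with hA
  set rep : 𝕋 → ℝ := fun z => ((AddCircle.equivIco 1 A z : ℝ)) with hrep
  have hrep_sec : ∀ z : 𝕋, ((rep z : ℝ) : 𝕋) = z := by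
    intro z
    exact (AddCircle.equivIco 1 A).symm_apply_apply z
  set c : ℝ := ‖((A : ℝ) : 𝕋)‖ with hc
  have hbad_ne : ((A : ℝ) : 𝕋) ≠ 0 := by
    rw [Ne, AddCircle.coe_eq_zero_iff]
    rintro ⟨n, hn⟩
    rw [zsmul_eq_mul, mul_one] at hn
    have h2 : ((2 * n : ℤ) : ℝ) = ((-1 : ℤ) : ℝ) := by push_cast; rw [hn]; norm_num [hA]
    have := Int.cast_injective h2
    omega
  have hcpos : 0 < c := norm_pos_iff.mpr hbad_ne
  have hrepc : ∀ z : 𝕋, ‖z‖ < c → ContinuousAt rep z := by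
    intro z h
    have hne : z ≠ ((A : ℝ) : 𝕋) := fun he => lt_irrefl c (by rwa [he] at h)
    have h1 : ContinuousAt (AddCircle.equivIco 1 A) z :=
      AddCircle.continuousAt_equivIco (p := 1) (a := A) hne
    show ContinuousAt ((Subtype.val : Ico A (A + 1) → ℝ) ∘ (AddCircle.equivIco 1 A)) z
    exact continuous_subtype_val.continuousAt.comp h1
  have huc : UniformContinuous χ := CompactSpace.uniformContinuous_of_continuous hχ
  obtain ⟨δ, hδpos, hδ⟩ := Metric.uniformContinuous_iff.mp huc c hcpos
  have hcontr : ∀ s t : ℝ, dist ((s : ℝ) : 𝕋) ((t : ℝ) : 𝕋) ≤ |s - t| := by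
    intro s t
    rw [dist_eq_norm, ← AddCircle.coe_sub]
    calc ‖((s - t : ℝ) : 𝕋)‖ = |(s - t) - round ((1:ℝ)⁻¹ * (s - t)) * 1| := AddCircle.norm_eq _
    _ = |(s - t) - round (s - t)| := by norm_num
    _ ≤ |(s - t) - ((0 : ℤ) : ℝ)| := round_le (s - t) 0
    _ = |s - t| := by norm_num
  obtain ⟨N, hN⟩ := exists_nat_gt (1 / δ)
  have hNpos : 0 < (N : ℝ) := lt_trans (by positivity) hN
  have hδN : (1 : ℝ) / N < δ := by
    rw [div_lt_iff₀ hNpos]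
    rw [div_lt_iff₀ hδpos] at hN
    linarith
  set ψ : ℝ → 𝕋 := fun t => χ ((t : ℝ) : 𝕋) with hψdef
  have hψc : Continuous ψ := hχ.comp (AddCircle.continuous_mk' 1)
  have hψper : ψ 1 = ψ 0 := by
    have h10 : ((1 : ℝ) : 𝕋) = ((0 : ℝ) : 𝕋) := by
      rw [AddCircle.coe_period]; norm_num
    simp only [hψdef, h10]
  set m : ℕ → ℝ → ℝ := fun j t => min t ((j : ℝ) / N) with hm
  have hmono : ∀ j t, 0 ≤ m (j+1) t - m j t ∧ m (j+1) t - m j t ≤ 1 / N := by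
    intro j t
    have hsum : (((j+1 : ℕ)) : ℝ) / N = (j : ℝ) / N + 1 / N := by
      push_cast; field_simp
    have hNinv : (0:ℝ) ≤ 1 / N := by positivity
    have hjj : ((j : ℝ)) / N ≤ (((j+1 : ℕ)) : ℝ) / N := by rw [hsum]; linarith
    rcases le_total t ((j : ℝ) / N) with h | h
    · have h1 : m j t = t := min_eq_left h
      have h2 : m (j+1) t = t := min_eq_left (le_trans h hjj)
      rw [h1, h2]
      exact ⟨by linarith, by linarith⟩
    · have h1 : m j t = (j : ℝ) / N := min_eq_right h
      have h2 : (j : ℝ) / N ≤ m (j+1) t := le_min h hjj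
      have h3 : m (j+1) t ≤ (((j+1 : ℕ)) : ℝ) / N := min_le_right _ _
      rw [h1]
      constructor <;> linarith [hsum ▸ h3]
  have hsmall : ∀ j t, ‖ψ (m (j+1) t) - ψ (m j t)‖ < c := by
    intro j t
    rw [← dist_eq_norm]
    apply hδ
    calc dist ((m (j+1) t : ℝ) : 𝕋) ((m j t : ℝ) : 𝕋) ≤ |m (j+1) t - m j t| := hcontr _ _
    _ < δ := by
        obtain ⟨h1, h2⟩ := hmono j t
        rw [abs_of_nonneg h1]; linarith
  set L : ℝ → ℝ := fun t => rep (ψ 0) + ∑ j ∈ Finset.range N,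
      rep (ψ (m (j+1) t) - ψ (m j t)) with hL
  have hmcont : ∀ j : ℕ, Continuous (fun t => m j t) := fun j =>
    continuous_id.min continuous_const
  have hLc : Continuous L := by
    apply continuous_const.add
    apply continuous_finset_sum
    intro j _
    rw [continuous_iff_continuousAt]
    intro t
    have hinner : Continuous (fun t => ψ (m (j+1) t) - ψ (m j t)) :=
      (hψc.comp (hmcont (j+1))).sub (hψc.comp (hmcont j))
    show ContinuousAt (rep ∘ fun t => ψ (m (j+1) t) - ψ (m j t)) t
    exact ContinuousAt.comp (hrepc _ (hsmall j t)) hinner.continuousAt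
  have hLcoe : ∀ t ∈ Icc (0:ℝ) 1, ((L t : ℝ) : 𝕋) = ψ t := by
    intro t ht
    rw [hL]
    simp only
    rw [AddCircle.coe_add, fd_coe_sum]
    have hterm : ∀ j ∈ Finset.range N, ((rep (ψ (m (j+1) t) - ψ (m j t)) : ℝ) : 𝕋)
        = ψ (m (j+1) t) - ψ (m j t) := fun j _ => hrep_sec _
    rw [Finset.sum_congr rfl hterm, hrep_sec, Finset.sum_range_sub (fun j => ψ (m j t))]
    have hN1 : m N t = t := by
      rw [hm]
      simp only
      rw [div_self (ne_of_gt hNpos)]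
      exact min_eq_left ht.2
    have hN0 : m 0 t = 0 := by
      rw [hm]
      simp only [Nat.cast_zero, zero_div]
      exact min_eq_right ht.1
    rw [hN1, hN0]
    abel
  have hd : ∃ d : ℤ, (d : ℝ) = L 1 - L 0 := by
    have : ((L 1 - L 0 : ℝ) : 𝕋) = 0 := by
      rw [AddCircle.coe_sub, hLcoe 1 (by norm_num), hLcoe 0 (by norm_num), hψper, sub_self]
    rw [AddCircle.coe_eq_zero_iff] at this
    obtain ⟨n, hn⟩ := this
    exact ⟨n, by rw [← hn, zsmul_eq_mul, mul_one]⟩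
  obtain ⟨d, hdval⟩ := hd
  set u : 𝕋 → ℝ := AddCircle.liftIco 1 0 (fun s => L s - d * s) with hu
  have huc2 : Continuous u := by
    apply AddCircle.liftIco_zero_continuous
    · show L 0 - (d:ℝ) * 0 = L 1 - (d:ℝ) * 1
      rw [hdval]; ring
    · exact ((hLc.sub (continuous_const.mul continuous_id)).continuousOn)
  have hucoe : ∀ s ∈ Ico (0:ℝ) 1, u ((s : ℝ) : 𝕋) = L s - d * s := by
    intro s hs
    exact AddCircle.liftIco_zero_coe_apply hs
  refine ⟨u, d, huc2, ?_⟩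
  intro t
  have hs : Int.fract t ∈ Ico (0:ℝ) 1 := ⟨Int.fract_nonneg t, Int.fract_lt_one t⟩
  have hfl : t - Int.fract t = ((⌊t⌋ : ℤ) : ℝ) := Int.self_sub_fract t
  have hts : ((t : ℝ) : 𝕋) = ((Int.fract t : ℝ) : 𝕋) := by
    rw [eq_comm, ← sub_eq_zero, ← AddCircle.coe_sub]
    have he : Int.fract t - t = ((-⌊t⌋ : ℤ) : ℝ) := by push_cast; linarith
    rw [he]
    exact fd_coe_int_eq_zero _
  rw [hts, hucoe _ hs]
  have hLs : χ ((Int.fract t : ℝ) : 𝕋) = ((L (Int.fract t) : ℝ) : 𝕋) :=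
    (hLcoe _ (Ico_subset_Icc_self hs)).symm
  rw [hLs]
  rw [eq_comm, ← sub_eq_zero, ← AddCircle.coe_sub]
  have hkey : L (Int.fract t) - d * Int.fract t + d * t - L (Int.fract t)
      = ((d * ⌊t⌋ : ℤ) : ℝ) := by
    push_cast
    linear_combination (d : ℝ) * hfl
  rw [hkey]
  exact fd_coe_int_eq_zero _




/-- Furstenberg's dichotomy: if the skew product `f(x,y) = (x+α, y+φ(x))` on `𝕋²`
(with `α` irrational, `φ` continuous) is not minimal, then `φ` is a continuous
coboundary plus a constant. -/
theorem stmt9 (α : ℝ) (hα : Irrational α) (φ : AddCircle (1:ℝ) → ℝ) (hφ : Continuous φ)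
    (F : AddCircle (1:ℝ) × AddCircle (1:ℝ) → AddCircle (1:ℝ) × AddCircle (1:ℝ))
    (hF : ∀ p, F p = (p.1 + (α : AddCircle (1:ℝ)), p.2 + ((φ p.1 : ℝ) : AddCircle (1:ℝ))))
    (hmin : ¬ ∀ z : AddCircle (1:ℝ) × AddCircle (1:ℝ),
      Dense (Set.range fun n : ℕ => F^[n] z)) :
    ∃ (g : AddCircle (1:ℝ) → ℝ) (r : ℝ), Continuous g ∧
      ∀ x, φ x = g x - g (x + (α : AddCircle (1:ℝ))) + r := by
  classical
  push_neg at hmin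
  obtain ⟨z₀, hz₀⟩ := hmin
  set a : 𝕋 := (α : 𝕋) with ha
  have hFc : Continuous F := by
    have hFeq : F = fun p => (p.1 + a, p.2 + ((φ p.1 : ℝ) : 𝕋)) := funext hF
    rw [hFeq]
    exact (continuous_fst.add continuous_const).prodMk
      (continuous_snd.add ((AddCircle.continuous_mk' 1).comp (hφ.comp continuous_fst)))
  set Z := closure (Set.range fun n : ℕ => F^[n] z₀) with hZ
  have hZcl : IsClosed Z := isClosed_closure
  have hZne : Z.Nonempty := ⟨z₀, subset_closure ⟨0, rfl⟩⟩
  have hZinv : ∀ p ∈ Z, F p ∈ Z := by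
    intro p hp
    have h1 : F '' Z ⊆ closure (F '' Set.range fun n : ℕ => F^[n] z₀) :=
      image_closure_subset_closure_image hFc
    have h2 : (F '' Set.range fun n : ℕ => F^[n] z₀) ⊆ Set.range fun n : ℕ => F^[n] z₀ := by
      rintro - ⟨-, ⟨n, rfl⟩, rfl⟩
      exact ⟨n+1, by simpa using Function.iterate_succ_apply' F n z₀⟩
    exact closure_mono h2 (h1 ⟨p, hp, rfl⟩)
  have hZprop : Z ≠ Set.univ := by
    intro h
    exact hz₀ (by rw [dense_iff_closure_eq, ← hZ, h])
  -- Zorn: a minimal closed invariant subset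
  set 𝒮 : Set (Set (𝕋 × 𝕋)) :=
    {A | A.Nonempty ∧ IsClosed A ∧ (∀ p ∈ A, F p ∈ A) ∧ A ⊆ Z} with h𝒮
  have hzorn : ∃ M, M ⊆ Z ∧ Minimal (· ∈ 𝒮) M := by
    apply zorn_superset_nonempty 𝒮 ?_ Z ⟨hZne, hZcl, hZinv, subset_rfl⟩
    intro c hc hchain hcne
    haveI : Nonempty c := hcne.to_subtype
    have hdir : DirectedOn (· ⊇ ·) c := by
      intro x hx y hy
      rcases hchain.total hx hy with h | h
      · exact ⟨x, hx, subset_rfl, h⟩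
      · exact ⟨y, hy, h, subset_rfl⟩
    refine ⟨⋂₀ c, ⟨?_, ?_, ?_, ?_⟩, fun s hs => sInter_subset_of_mem hs⟩
    · exact IsCompact.nonempty_sInter_of_directed_nonempty_isCompact_isClosed hdir
        (fun U hU => (hc hU).1) (fun U hU => (hc hU).2.1.isCompact)
        (fun U hU => (hc hU).2.1)
    · exact isClosed_sInter fun U hU => (hc hU).2.1
    · intro p hp
      rw [Set.mem_sInter] at hp ⊢
      intro U hU
      exact (hc hU).2.2.1 p (hp U hU)
    · obtain ⟨U, hU⟩ := hcne
      exact (sInter_subset_of_mem hU).trans (hc hU).2.2.2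
  obtain ⟨M, -, hMmin⟩ := hzorn
  obtain ⟨hM1, hM2, hM3, hM4⟩ := hMmin.prop
  have hMcpt : IsCompact M := hM2.isCompact
  have hstar : ∀ A : Set (𝕋 × 𝕋), A.Nonempty → IsClosed A → (∀ p ∈ A, F p ∈ A) →
      A ⊆ M → A = M := fun A h1 h2 h3 h4 =>
    subset_antisymm h4 (hMmin.2 ⟨h1, h2, h3, h4.trans hM4⟩ h4)
  -- single step of F on M, in coordinates
  have hMstep : ∀ x y, (x, y) ∈ M → (x + a, y + ((φ x : ℝ) : 𝕋)) ∈ M := by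
    intro x y hxy
    have := hM3 _ hxy
    rwa [hF] at this
  -- every base fiber is nonempty
  have hfib : ∀ x : 𝕋, ∃ y, (x, y) ∈ M := by
    obtain ⟨⟨x₁, y₁⟩, hp⟩ := hM1
    have horb : ∀ n : ℕ, F^[n] (x₁, y₁) ∈ M ∧ (F^[n] (x₁, y₁)).1 = x₁ + n • a := by
      intro n
      induction n with
      | zero => exact ⟨hp, by simp⟩
      | succ n ih =>
        rw [Function.iterate_succ_apply']
        refine ⟨hM3 _ ih.1, ?_⟩
        rw [hF]
        simp only
        rw [ih.2, succ_nsmul, add_assoc]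
    have hcl : IsClosed (Prod.fst '' M) := (hMcpt.image continuous_fst).isClosed
    have hsub : Set.range (fun n : ℕ => x₁ + n • a) ⊆ Prod.fst '' M := by
      rintro - ⟨n, rfl⟩
      exact ⟨F^[n] (x₁, y₁), (horb n).1, (horb n).2⟩
    have huniv : (Set.univ : Set 𝕋) ⊆ Prod.fst '' M := by
      rw [← (fd_dense_orbit α hα x₁).closure_eq]
      exact hcl.closure_subset_iff.mpr hsub
    intro x
    obtain ⟨p, hpM, hpx⟩ := huniv (Set.mem_univ x)
    refine ⟨p.2, ?_⟩
    rw [← hpx]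
    simpa using hpM
  -- the stabilizer subgroup S
  set S : Set 𝕋 := {t | ∀ p ∈ M, (p.1, p.2 + t) ∈ M} with hSdef
  have hVF : ∀ (t : 𝕋) (p : 𝕋 × 𝕋), F (p.1, p.2 + t) = ((F p).1, (F p).2 + t) := by
    intro t p
    rw [hF, hF]
    simp only
    refine Prod.ext rfl ?_
    simp only
    abel
  have hS_eq : ∀ t ∈ S, (fun p : 𝕋 × 𝕋 => (p.1, p.2 + t)) '' M = M := by
    intro t ht
    apply hstar
    · exact hM1.image _
    · exact (hMcpt.image ((continuous_fst).prodMk (continuous_snd.add continuous_const))).isClosed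
    · rintro - ⟨p, hpM, rfl⟩
      rw [hVF t p]
      exact ⟨F p, hM3 p hpM, rfl⟩
    · rintro - ⟨p, hpM, rfl⟩
      exact ht p hpM
  have hsub_neg : ∀ t : 𝕋, M ⊆ (fun p : 𝕋 × 𝕋 => (p.1, p.2 + t)) '' M → -t ∈ S := by
    intro t hsub p hp
    obtain ⟨q, hq, hqe⟩ := hsub hp
    have h1 : p.1 = q.1 := by rw [← hqe]
    have h2 : p.2 = q.2 + t := by rw [← hqe]
    have : (p.1, p.2 + -t) = (q.1, q.2) := by
      rw [h1, h2]
      refine Prod.ext rfl ?_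
      simp only
      abel
    rw [this, Prod.mk.eta]
    exact hq
  have hSneg : ∀ t ∈ S, -t ∈ S := fun t ht =>
    hsub_neg t (by rw [hS_eq t ht])
  have hS0 : (0 : 𝕋) ∈ S := by
    intro p hp
    simpa using hp
  have hSadd : ∀ s ∈ S, ∀ t ∈ S, s + t ∈ S := by
    intro s hs t ht p hp
    have h1 := ht _ (hs p hp)
    simpa [add_assoc] using h1
  have hScl : IsClosed S := by
    have : S = ⋂ p ∈ M, (fun t : 𝕋 => (p.1, p.2 + t)) ⁻¹' M := by
      ext t
      simp only [hSdef, Set.mem_setOf_eq, Set.mem_iInter, Set.mem_preimage]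
    rw [this]
    exact isClosed_biInter fun p _ =>
      hM2.preimage (continuous_const.prodMk (continuous_const.add continuous_id))
  have hSne : S ≠ Set.univ := by
    intro hSu
    apply hZprop
    have hMuniv : M = Set.univ := by
      apply Set.eq_univ_of_forall
      intro p
      obtain ⟨y₀, hy₀⟩ := hfib p.1
      have ht : p.2 - y₀ ∈ S := by rw [hSu]; trivial
      have := ht (p.1, y₀) hy₀
      simpa using this
    rw [← Set.univ_subset_iff, ← hMuniv]
    exact hM4
  -- differences of fiber points lie in S
  have hdiffS : ∀ x y y', (x, y) ∈ M → (x, y') ∈ M → y - y' ∈ S := by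
    intro x y y' hy hy'
    set t : 𝕋 := y - y' with htdef
    have hA : M ∩ ((fun p : 𝕋 × 𝕋 => (p.1, p.2 + t)) '' M) = M := by
      apply hstar
      · refine ⟨(x, y), hy, ⟨(x, y'), hy', ?_⟩⟩
        refine Prod.ext rfl ?_
        simp only [htdef]
        abel
      · exact hM2.inter
          (hMcpt.image ((continuous_fst).prodMk (continuous_snd.add continuous_const))).isClosed
      · rintro p ⟨hpM, q, hqM, rfl⟩
        refine ⟨hM3 _ hpM, ?_⟩
        rw [hVF t q]
        exact ⟨F q, hM3 q hqM, rfl⟩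
      · exact Set.inter_subset_left
    have hsub : M ⊆ (fun p : 𝕋 × 𝕋 => (p.1, p.2 + t)) '' M := by
      intro p hp
      rw [← hA] at hp
      exact hp.2
    have := hSneg _ (hsub_neg t hsub)
    rwa [neg_neg] at this
  -- S is finite
  have hSfin : S.Finite := by
    set π : ℝ →+ 𝕋 := QuotientAddGroup.mk' (AddSubgroup.zmultiples (1:ℝ)) with hπ
    set Sgrp : AddSubgroup 𝕋 :=
      { carrier := S
        add_mem' := fun {s t} hs ht => hSadd s hs t ht
        zero_mem' := hS0
        neg_mem' := fun {t} ht => hSneg t ht } with hSgrp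
    set H : AddSubgroup ℝ := Sgrp.comap π with hH
    have hmemH : ∀ x : ℝ, x ∈ H ↔ ((x : ℝ) : 𝕋) ∈ S := fun x => Iff.rfl
    rcases H.dense_or_cyclic with hd | ⟨g, hg⟩
    · exfalso
      apply hSne
      have hsub : ((↑) : ℝ → 𝕋) '' (H : Set ℝ) ⊆ S := by
        rintro - ⟨x, hx, rfl⟩
        exact (hmemH x).mp hx
      have hdense : Dense (((↑) : ℝ → 𝕋) '' (H : Set ℝ)) := by
        rw [dense_iff_closure_eq]
        apply eq_univ_of_univ_subset
        have h1 : (Set.univ : Set 𝕋) = ((↑) : ℝ → 𝕋) '' closure (H : Set ℝ) := by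
          rw [hd.closure_eq, image_univ, Set.range_eq_univ.mpr QuotientAddGroup.mk_surjective]
        rw [h1]
        exact image_closure_subset_closure_image (AddCircle.continuous_mk' 1)
      rw [← Set.univ_subset_iff]
      rw [← (hdense.mono hsub).closure_eq]
      exact hScl.closure_subset_iff.mpr subset_rfl
    · rw [← AddSubgroup.zmultiples_eq_closure] at hg
      have h1H : (1 : ℝ) ∈ H := by
        rw [hmemH]
        have h10 : ((1:ℝ) : 𝕋) = 0 := AddCircle.coe_period (1:ℝ)
        rw [h10]
        exact hS0
      rw [hg] at h1H
      obtain ⟨n, hn⟩ := AddSubgroup.mem_zmultiples_iff.mp h1H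
      have hn0 : n ≠ 0 := by
        intro h
        rw [h, zero_zsmul] at hn
        exact one_ne_zero hn.symm
      set m : ℤ := (n.natAbs : ℤ) with hm
      have hmpos : 0 < m := by
        rw [hm]
        exact_mod_cast Int.natAbs_pos.mpr hn0
      have hper : ((m • g : ℝ) : 𝕋) = 0 := by
        rcases Int.natAbs_eq n with h | h
        · rw [← h] at hm
          rw [hm, hn]
          exact AddCircle.coe_period (1:ℝ)
        · have hmn : m = -n := by omega
          rw [hmn, neg_zsmul, hn, AddCircle.coe_neg, AddCircle.coe_period (1:ℝ)]
          exact neg_zero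
      have hsub : S ⊆ (fun r : ℤ => ((r • g : ℝ) : 𝕋)) '' (Set.Icc 0 m) := by
        intro s hs
        obtain ⟨x, rfl⟩ := QuotientAddGroup.mk_surjective s
        have hxH : x ∈ H := (hmemH x).mpr hs
        rw [hg] at hxH
        obtain ⟨k, hk⟩ := AddSubgroup.mem_zmultiples_iff.mp hxH
        refine ⟨k % m, ⟨Int.emod_nonneg k (ne_of_gt hmpos), le_of_lt (Int.emod_lt_of_pos k hmpos)⟩, ?_⟩
        have hdecomp : k • g = (k % m) • g + (k / m) • (m • g) := by
          rw [← mul_zsmul, ← add_zsmul]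
          congr 1
          rw [mul_comm]
          exact (Int.emod_add_mul_ediv k m).symm
        rw [← hk, hdecomp, AddCircle.coe_add, AddCircle.coe_zsmul (n := k / m), hper,
          smul_zero, add_zero]
      exact Set.Finite.subset ((Set.finite_Icc 0 m).image _) hsub
  -- Lagrange
  haveI hfinS : Finite S := hSfin.to_subtype
  set q : ℕ := Nat.card S with hq
  have hqpos : 0 < q := Nat.card_pos_iff.mpr ⟨⟨0, hS0⟩, hfinS⟩
  have hLag : ∀ s ∈ S, q • s = 0 := by
    intro s hs
    set Sgrp : AddSubgroup 𝕋 :=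
      { carrier := S
        add_mem' := fun {s t} hs ht => hSadd s hs t ht
        zero_mem' := hS0
        neg_mem' := fun {t} ht => hSneg t ht } with hSgrp
    haveI : Finite Sgrp := hfinS
    have h1 : Nat.card Sgrp • (⟨s, hs⟩ : Sgrp) = 0 := card_nsmul_eq_zero'
    have hqq : q = Nat.card Sgrp := rfl
    have h2 := congrArg (Subtype.val) h1
    rw [hqq]
    push_cast at h2
    exact h2
  -- the fiber map χ
  choose Y hY using hfib
  set χ : 𝕋 → 𝕋 := fun x => q • (Y x) with hχdef
  have hχeq : ∀ x y, (x, y) ∈ M → χ x = q • y := by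
    intro x y hy
    have hd := hdiffS x (Y x) y (hY x) hy
    have h0 := hLag _ hd
    rw [smul_sub] at h0
    have := sub_eq_zero.mp h0
    rw [hχdef]
    exact this
  have hχc : Continuous χ := by
    apply fd_closed_graph
    have hgraph : {p : 𝕋 × 𝕋 | p.2 = χ p.1} = (fun p : 𝕋 × 𝕋 => (p.1, q • p.2)) '' M := by
      ext ⟨x, y⟩
      simp only [Set.mem_setOf_eq, Set.mem_image]
      constructor
      · rintro rfl
        exact ⟨(x, Y x), hY x, rfl⟩
      · rintro ⟨⟨x', y'⟩, hM', he⟩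
        have hx : x' = x := congrArg Prod.fst he
        have hy : q • y' = y := congrArg Prod.snd he
        rw [← hy, hχeq x y' (hx ▸ hM')]
    rw [hgraph]
    exact (hMcpt.image ((continuous_fst).prodMk
      ((continuous_nsmul q).comp continuous_snd))).isClosed
  have hχfe : ∀ x, χ (x + a) = χ x + ((q * φ x : ℝ) : 𝕋) := by
    intro x
    have h1 : (x + a, Y x + ((φ x : ℝ) : 𝕋)) ∈ M := hMstep x (Y x) (hY x)
    rw [hχeq _ _ h1, smul_add]
    congr 1
    rw [← AddCircle.coe_nsmul, nsmul_eq_mul]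
  -- decompose χ
  obtain ⟨u, d, hu, hud⟩ := fd_decomp χ hχc
  set E : 𝕋 → ℝ := fun x => u (x + a) - u x + d * α - q * φ x with hEdef
  have hEcont : Continuous E :=
    (((hu.comp (continuous_add_right a)).sub hu).add continuous_const).sub
      (continuous_const.mul hφ)
  have hEint : ∀ x, ∃ n : ℤ, E x = n := by
    intro x
    obtain ⟨t, rfl⟩ := QuotientAddGroup.mk_surjective x
    have hcoe : ((t : ℝ) : 𝕋) + a = ((t + α : ℝ) : 𝕋) := by
      rw [AddCircle.coe_add, ha]
    have h1 := hud t
    have h2 := hud (t + α)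
    have h3 := hχfe ((t : ℝ) : 𝕋)
    rw [hcoe] at h3
    rw [h1, h2] at h3
    have h4 : ((u ((t + α : ℝ) : 𝕋) + d * (t + α) - (u ((t:ℝ):𝕋) + d * t + q * φ ((t:ℝ):𝕋)) : ℝ) : 𝕋) = 0 := by
      rw [AddCircle.coe_sub, h3, ← AddCircle.coe_add, sub_eq_zero]
    rw [AddCircle.coe_eq_zero_iff] at h4
    obtain ⟨n, hn⟩ := h4
    refine ⟨n, ?_⟩
    rw [zsmul_eq_mul, mul_one] at hn
    rw [hEdef]
    simp only
    rw [hcoe]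
    linear_combination -hn
  have hEconst : ∀ x, E x = E 0 := fun x => fd_int_const hEcont hEint x 0
  have hqR : (0 : ℝ) < q := by exact_mod_cast hqpos
  refine ⟨fun x => -(u x) / q, (d * α - E 0) / q, (hu.neg.div_const _), ?_⟩
  intro x
  have hc : u (x + a) - u x + ↑d * α - ↑q * φ x = E 0 := hEconst x
  have hq0 : (q : ℝ) ≠ 0 := ne_of_gt hqR
  have key : φ x = (u (x + a) - u x + ↑d * α - E 0) / q := by
    rw [eq_div_iff hq0]
    linarith [hc]
  rw [key]
  ring
end

section
/- Let α be irrational, q a positive integer, and p an integer with |α - p/q| < 1/q². Then the finite orbit {x, x+α, x+2α, …, x+qα} (mod 1) is 2/q-dense in ℝ/ℤ for every x: every point of 𝕋¹ is within distance 2/q of some point x + iα mod 1 with 0 ≤ i ≤ q. -/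
lemma dist_coe_le_abs (s t : ℝ) :
    dist (s : AddCircle (1:ℝ)) (t : AddCircle (1:ℝ)) ≤ |s - t| := by
  rw [dist_eq_norm, ← AddCircle.coe_sub]
  simpa using QuotientAddGroup.norm_mk_le_norm (S := AddSubgroup.zmultiples (1:ℝ)) (m := s - t)

/-- If `|α - p/q| < 1/q²` with `gcd(p,q) = 1`, then for every `x` the finite orbit
`{x, x+α, …, x+qα}` (mod 1) is `2/q`-dense in `ℝ/ℤ`. -/
theorem stmt17 (α : ℝ) (hα : Irrational α) (q : ℕ) (hq : 0 < q) (p : ℤ)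
    (hcop : Int.gcd p (q : ℤ) = 1)
    (happ : |α - (p : ℝ) / (q : ℝ)| < 1 / (q : ℝ) ^ 2) :
    ∀ x z : AddCircle (1:ℝ), ∃ i : ℕ, i ≤ q ∧
      dist z (x + i • ((α : ℝ) : AddCircle (1:ℝ))) ≤ 2 / (q : ℝ) := by
  intro x z
  have hq0 : (0:ℝ) < (q:ℝ) := by exact_mod_cast hq
  have hqz : (q:ℤ) ≠ 0 := by exact_mod_cast hq.ne'
  obtain ⟨t, ht⟩ : ∃ t : ℝ, (t : AddCircle (1:ℝ)) = z - x := Quotient.exists_rep _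
  set j : ℤ := round ((q:ℝ) * t) with hj
  set u : ℤ := Int.gcdA p (q:ℤ) with hu
  have hb : 1 = p * u + (q:ℤ) * Int.gcdB p (q:ℤ) := by
    have h := Int.gcd_eq_gcd_ab p (q:ℤ)
    rw [hcop] at h
    simpa [hu] using h
  set i' : ℤ := (j * u) % (q:ℤ) with hi'
  have hi'0 : 0 ≤ i' := Int.emod_nonneg _ hqz
  have hi'lt : i' < (q:ℤ) := Int.emod_lt_of_pos _ (by exact_mod_cast hq)
  set i : ℕ := i'.toNat with hidef
  have hiq : (i : ℤ) = i' := Int.toNat_of_nonneg hi'0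
  refine ⟨i, by omega, ?_⟩
  -- divisibility: q ∣ i' * p - j
  have hdvd : (q:ℤ) ∣ i' * p - j := by
    have h1 : (q:ℤ) ∣ j * u * p - j := by
      have heq : j * u * p - j = j * (u * p - 1) := by ring
      rw [heq]
      exact Dvd.dvd.mul_left ⟨-Int.gcdB p (q:ℤ), by linarith [hb]⟩ j
    have h2 : (q:ℤ) ∣ i' - j * u := by
      refine ⟨-(j * u / (q:ℤ)), ?_⟩
      have := Int.emod_add_mul_ediv (j * u) (q:ℤ)
      rw [hi']; linarith
    have heq2 : i' * p - j = (i' - j * u) * p + (j * u * p - j) := by ring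
    rw [heq2]
    exact dvd_add (h2.mul_right p) h1
  obtain ⟨k, hk⟩ := hdvd
  -- key coincidence in the circle
  have hcoe : (((i : ℝ) * (p:ℝ) / (q:ℝ) : ℝ) : AddCircle (1:ℝ))
      = (((j:ℝ) / (q:ℝ) : ℝ) : AddCircle (1:ℝ)) := by
    have hdiff : (i:ℝ) * (p:ℝ) / (q:ℝ) - (j:ℝ) / (q:ℝ) = (k:ℝ) := by
      have hcast : (i:ℝ) * (p:ℝ) - (j:ℝ) = (q:ℝ) * (k:ℝ) := by
        exact_mod_cast hiq ▸ hk
      field_simp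
      linarith
    rw [← sub_eq_zero, ← AddCircle.coe_sub, hdiff, AddCircle.coe_eq_zero_iff]
    exact ⟨k, by simp⟩
  -- rewrite the target
  have hsm : i • ((α : ℝ) : AddCircle (1:ℝ)) = (((i:ℝ) * α : ℝ) : AddCircle (1:ℝ)) := by
    rw [← AddCircle.coe_nsmul]; norm_num [nsmul_eq_mul]
  have hz : z = x + (t : AddCircle (1:ℝ)) := by rw [ht]; abel
  rw [hz, hsm, dist_add_left]
  have h1 : dist (t : AddCircle (1:ℝ)) (((j:ℝ)/(q:ℝ) : ℝ) : AddCircle (1:ℝ))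
      ≤ 1 / (2 * (q:ℝ)) := by
    refine (dist_coe_le_abs _ _).trans ?_
    have h := abs_sub_round ((q:ℝ) * t)
    rw [← hj] at h
    rw [abs_sub_comm] at h
    have habs : |t - (j:ℝ)/(q:ℝ)| = |(q:ℝ) * t - (j:ℝ)| / (q:ℝ) := by
      have heq : t - (j:ℝ)/(q:ℝ) = ((q:ℝ) * t - (j:ℝ)) / (q:ℝ) := by field_simp
      rw [heq, abs_div, abs_of_pos hq0]
    rw [habs]
    rw [div_le_div_iff₀ hq0 (by positivity)]
    have h' : |(q:ℝ) * t - (j:ℝ)| ≤ 1/2 := abs_sub_comm ((j:ℝ)) ((q:ℝ)*t) ▸ h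
    nlinarith
  have h2 : dist ((((j:ℝ)/(q:ℝ)) : ℝ) : AddCircle (1:ℝ)) (((i:ℝ) * α : ℝ) : AddCircle (1:ℝ))
      ≤ 1 / (q:ℝ) := by
    rw [← hcoe]
    refine (dist_coe_le_abs _ _).trans ?_
    have hiqr : (i:ℝ) ≤ (q:ℝ) := by exact_mod_cast (by omega : i ≤ q)
    have hin : (0:ℝ) ≤ (i:ℝ) := Nat.cast_nonneg i
    have : |(i:ℝ) * (p:ℝ)/(q:ℝ) - (i:ℝ) * α| = (i:ℝ) * |α - (p:ℝ)/(q:ℝ)| := by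
      have heq : (i:ℝ) * (p:ℝ)/(q:ℝ) - (i:ℝ) * α = (i:ℝ) * ((p:ℝ)/(q:ℝ) - α) := by ring
      rw [heq, abs_mul, abs_of_nonneg hin, abs_sub_comm]
    rw [this]
    have hle : |α - (p:ℝ)/(q:ℝ)| ≤ 1/(q:ℝ)^2 := happ.le
    calc (i:ℝ) * |α - (p:ℝ)/(q:ℝ)| ≤ (q:ℝ) * (1/(q:ℝ)^2) := by
          exact mul_le_mul hiqr hle (abs_nonneg _) hq0.le
      _ = 1/(q:ℝ) := by field_simp
  calc dist (t : AddCircle (1:ℝ)) (((i:ℝ) * α : ℝ) : AddCircle (1:ℝ))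
      ≤ dist (t : AddCircle (1:ℝ)) ((((j:ℝ)/(q:ℝ)) : ℝ) : AddCircle (1:ℝ))
        + dist ((((j:ℝ)/(q:ℝ)) : ℝ) : AddCircle (1:ℝ)) (((i:ℝ) * α : ℝ) : AddCircle (1:ℝ)) :=
        dist_triangle _ _ _
    _ ≤ 1 / (2 * (q:ℝ)) + 1 / (q:ℝ) := add_le_add h1 h2
    _ ≤ 2 / (q:ℝ) := by rw [div_add_div _ _ (by positivity) hq0.ne', div_le_div_iff₀ (by positivity) hq0]; ring_nf; nlinarith
end
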